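/- arXiv:math/0211119 — 2 statements merged into one kernel-verified Lean document; each statement's English description precedes it below -/
import Mathlib

section
/- Let f, g ∈ ℂ[X] with g(X) = Πₖ (X + cₖ) a product of monic linear factors, cₖ ∈ ℂ. If for every polynomial p ∈ ℂ[X] the sum of residues Σ_{b∈ℂ} Res_{X=b} (p(X)·f(X)/g(X)) is zero, then g divides f in ℂ[X]. -/
open Polynomial

/-- The residue of a rational function `h` at the point `b`: the coefficient of
`(X - b)⁻¹` in the Laurent expansion of `h` about `b`. -/
noncomputable def residue (h : RatFunc ℂ) (b : ℂ) : ℂ :=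
  ((RatFunc.laurent b h : LaurentSeries ℂ)).coeff (-1)

/-- The total residue `Res⁺`: the sum of the residues of `h` over all points of `ℂ`. -/
noncomputable def totalResidue (h : RatFunc ℂ) : ℂ := ∑ᶠ b : ℂ, residue h b

lemma coe_algebraMap_ratFunc (p : ℂ[X]) :
    ((algebraMap ℂ[X] (RatFunc ℂ) p : RatFunc ℂ) : LaurentSeries ℂ)
      = ((p : PowerSeries ℂ) : LaurentSeries ℂ) := (RatFunc.coe_coe p).symm

lemma coeff_neg_one_div (p q : ℂ[X]) (hq : q.coeff 0 ≠ 0) :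
    ((algebraMap ℂ[X] (RatFunc ℂ) p / algebraMap ℂ[X] (RatFunc ℂ) q : RatFunc ℂ)
      : LaurentSeries ℂ).coeff (-1) = 0 := by
  have hqu : IsUnit (q : PowerSeries ℂ) := by
    rw [PowerSeries.isUnit_iff_constantCoeff]
    simp only [Polynomial.constantCoeff_coe]
    exact hq.isUnit
  have hq0 : ((q : PowerSeries ℂ) : LaurentSeries ℂ) ≠ 0 := by
    intro h0
    apply hq
    have : (q : PowerSeries ℂ) = 0 := by
      apply HahnSeries.ofPowerSeries_injective (Γ := ℤ)
      rw [map_zero]; exact h0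
    simpa using congrArg (PowerSeries.coeff 0) this
  set w : PowerSeries ℂ := (p : PowerSeries ℂ) * Ring.inverse (q : PowerSeries ℂ) with hw
  have hwq : w * (q : PowerSeries ℂ) = (p : PowerSeries ℂ) := by
    rw [hw, mul_assoc, Ring.inverse_mul_cancel _ hqu, mul_one]
  have key : ((algebraMap ℂ[X] (RatFunc ℂ) p / algebraMap ℂ[X] (RatFunc ℂ) q : RatFunc ℂ)
      : LaurentSeries ℂ) = ((w : LaurentSeries ℂ)) := by
    rw [map_div₀, coe_algebraMap_ratFunc, coe_algebraMap_ratFunc,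
      div_eq_iff hq0, ← PowerSeries.coe_mul, hwq]
  rw [key, PowerSeries.coeff_coe]
  simp

lemma residue_add (h₁ h₂ : RatFunc ℂ) (b : ℂ) :
    residue (h₁ + h₂) b = residue h₁ b + residue h₂ b := by
  unfold residue
  rw [map_add, map_add, HahnSeries.coeff_add]

lemma residue_algebraMap (p : ℂ[X]) (b : ℂ) :
    residue (algebraMap ℂ[X] (RatFunc ℂ) p) b = 0 := by
  unfold residue
  rw [RatFunc.laurent_algebraMap, coe_algebraMap_ratFunc, PowerSeries.coeff_coe]
  simp

lemma residue_C_div_same (a b : ℂ) :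
    residue (algebraMap ℂ[X] (RatFunc ℂ) (C a) / algebraMap ℂ[X] (RatFunc ℂ) (X - C b)) b
      = a := by
  unfold residue
  rw [map_div₀, RatFunc.laurent_algebraMap, RatFunc.laurent_algebraMap]
  have h1 : taylor b (C a) = C a := taylor_C b a
  have h2 : taylor b (X - C b) = X := by
    rw [map_sub, taylor_X, taylor_C]; ring
  rw [h1, h2, map_div₀, coe_algebraMap_ratFunc, coe_algebraMap_ratFunc]
  have hX : ((X : ℂ[X]) : PowerSeries ℂ) = PowerSeries.X := by simp
  have hC : ((C a : ℂ[X]) : PowerSeries ℂ) = PowerSeries.C a := by simp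
  rw [hX, hC, PowerSeries.coe_X, PowerSeries.coe_C]
  have hXne : (HahnSeries.single (1 : ℤ) (1 : ℂ)) ≠ 0 := by
    exact HahnSeries.single_ne_zero (one_ne_zero (α := ℂ))
  have : (HahnSeries.C a : LaurentSeries ℂ) / HahnSeries.single (1 : ℤ) (1 : ℂ)
      = HahnSeries.single (-1 : ℤ) a := by
    rw [div_eq_iff hXne, HahnSeries.single_mul_single]
    simp [HahnSeries.C_apply]
  rw [this, HahnSeries.coeff_single_same]

lemma residue_C_div_ne (a b b' : ℂ) (hne : b' ≠ b) :
    residue (algebraMap ℂ[X] (RatFunc ℂ) (C a) / algebraMap ℂ[X] (RatFunc ℂ) (X - C b)) b'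
      = 0 := by
  unfold residue
  rw [map_div₀, RatFunc.laurent_algebraMap, RatFunc.laurent_algebraMap]
  apply coeff_neg_one_div
  rw [map_sub, taylor_X, taylor_C]
  simp [sub_eq_zero, sub_ne_zero.mpr hne]

theorem stmt3 (n : ℕ) (c : Fin n → ℂ) (f : Polynomial ℂ)
    (g : Polynomial ℂ) (hg : g = ∏ k, (Polynomial.X + Polynomial.C (c k)))
    (h : ∀ p : Polynomial ℂ,
      totalResidue (algebraMap (Polynomial ℂ) (RatFunc ℂ) (p * f) /
        algebraMap (Polynomial ℂ) (RatFunc ℂ) g) = 0) :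
    g ∣ f := by
  classical
  by_contra hndvd
  have hmon : g.Monic := by
    rw [hg]; exact monic_prod_of_monic _ _ fun k _ => by simpa using monic_X_add_C (c (k))
  have hg0 : g ≠ 0 := hmon.ne_zero
  set r : ℂ[X] := f %ₘ g with hrdef
  have hf : f = r + g * (f /ₘ g) := (modByMonic_add_div f g).symm
  have hr0 : r ≠ 0 := fun h0 => hndvd ((modByMonic_eq_zero_iff_dvd hmon).mp h0)
  -- find a root b of g with rootMultiplicity b r < rootMultiplicity b g
  have hex : ∃ b : ℂ, rootMultiplicity b r < rootMultiplicity b g := by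
    by_contra hall
    push_neg at hall
    have hle : g.roots ≤ r.roots := by
      rw [Multiset.le_iff_count]
      intro b
      rw [count_roots, count_roots]
      exact hall b
    have hdvd : g ∣ r :=
      Polynomial.Splits.dvd_of_roots_le_roots (IsAlgClosed.splits g) hg0 hle
    exact hndvd (by rw [hf]; exact dvd_add hdvd (dvd_mul_right g _))
  obtain ⟨b, hjm⟩ := hex
  set m : ℕ := rootMultiplicity b g with hm
  set j : ℕ := rootMultiplicity b r with hj
  set t : ℂ[X] := g /ₘ (X - C b) ^ m with htdef
  set u : ℂ[X] := r /ₘ (X - C b) ^ j with hudef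
  have hgt : (X - C b) ^ m * t = g := pow_mul_divByMonic_rootMultiplicity_eq g b
  have hru : (X - C b) ^ j * u = r := pow_mul_divByMonic_rootMultiplicity_eq r b
  have hueval : u.eval b ≠ 0 := eval_divByMonic_pow_rootMultiplicity_ne_zero b hr0
  have hteval : t.eval b ≠ 0 := eval_divByMonic_pow_rootMultiplicity_ne_zero b hg0
  set a : ℂ := u.eval b with ha
  set s : ℂ[X] := u /ₘ (X - C b) with hsdef
  have hus : u = (X - C b) * s + C a := by
    conv_lhs => rw [← modByMonic_add_div u (X - C b)]
    rw [modByMonic_X_sub_C_eq_C_eval]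
    ring
  set p : ℂ[X] := (X - C b) ^ (m - 1 - j) * t with hpdef
  set Q : ℂ[X] := p * (f /ₘ g) + s with hQdef
  have hpow : (m - 1 - j) + j + 1 = m := by omega
  have h1 : p * r * (X - C b) = g * u := by
    rw [← hru, ← hgt, ← hpow, hpdef]; ring
  have poly : p * f * (X - C b) = (Q * (X - C b) + C a) * g := by
    rw [hQdef]
    have hf' : f = r + g * (f /ₘ g) := hf
    linear_combination (X - C b) * p * hf' + h1 + g * hus
  -- translate to RatFunc
  set A := algebraMap ℂ[X] (RatFunc ℂ) with hA
  have hAg : A g ≠ 0 := RatFunc.algebraMap_ne_zero hg0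
  have hAX : A (X - C b) ≠ 0 := RatFunc.algebraMap_ne_zero (X_sub_C_ne_zero b)
  have key : A (p * f) / A g = A Q + A (C a) / A (X - C b) := by
    have : A (p * f) / A g = A (Q * (X - C b) + C a) / A (X - C b) := by
      rw [div_eq_div_iff hAg hAX, ← map_mul, ← map_mul]
      exact congrArg A poly
    rw [this, map_add, map_mul, add_div, mul_div_assoc, div_self hAX, mul_one]
  have htot := h p
  rw [key] at htot
  apply hueval
  rw [← htot]
  unfold totalResidue
  symm
  rw [finsum_eq_single _ b]
  · rw [residue_add, residue_algebraMap, residue_C_div_same, zero_add]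
  · intro b' hb'
    rw [residue_add, residue_algebraMap, residue_C_div_ne a b b' hb', zero_add]
end

section
/- Let f, g ∈ ℂ[X] with g monic, nonconstant, and splitting over ℂ. If f/g has zero residue at every root of g (i.e., Res_{X=b}(f/g) = 0 for all b ∈ ℂ) and moreover Res_{X=b}(X^m · f/g) = 0 for all b ∈ ℂ and all m ≥ 0, then g divides f. -/
open Polynomial

private lemma coe_algMap (p : Polynomial ℂ) :
    ((algebraMap (Polynomial ℂ) (RatFunc ℂ) p : RatFunc ℂ) : LaurentSeries ℂ)
      = ((p : PowerSeries ℂ) : LaurentSeries ℂ) := by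
  rw [RatFunc.coe_coe]
  rfl

private lemma neg_coeff_vanish (f g : Polynomial ℂ) (b : ℂ)
    (hm : ∀ m : ℕ, residue (RatFunc.X ^ m * (algebraMap (Polynomial ℂ) (RatFunc ℂ) f /
      algebraMap (Polynomial ℂ) (RatFunc ℂ) g)) b = 0) :
    ∀ n : ℤ, n < 0 →
      ((RatFunc.laurent b (algebraMap (Polynomial ℂ) (RatFunc ℂ) f /
        algebraMap (Polynomial ℂ) (RatFunc ℂ) g) : RatFunc ℂ) : LaurentSeries ℂ).coeff n = 0 := by
  set u : RatFunc ℂ := algebraMap (Polynomial ℂ) (RatFunc ℂ) f /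
    algebraMap (Polynomial ℂ) (RatFunc ℂ) g with hu
  -- linearity: residues of `p * u` vanish for all polynomials p
  have hL : ∀ p : Polynomial ℂ,
      ((RatFunc.laurent b (algebraMap (Polynomial ℂ) (RatFunc ℂ) p * u) : RatFunc ℂ)
        : LaurentSeries ℂ).coeff (-1) = 0 := by
    intro p
    induction p using Polynomial.induction_on' with
    | add p q hp hq =>
      rw [map_add, add_mul, map_add, map_add, HahnSeries.coeff_add, hp, hq, add_zero]
    | monomial n a =>
      have : (monomial n a : Polynomial ℂ) = C a * X ^ n := by
        rw [C_mul_X_pow_eq_monomial]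
      have e : (algebraMap (Polynomial ℂ) (RatFunc ℂ)) (C a * X ^ n) * u
          = RatFunc.C a * (RatFunc.X ^ n * u) := by
        rw [map_mul, map_pow, RatFunc.algebraMap_C, RatFunc.algebraMap_X, mul_assoc]
      have hcC : ((RatFunc.C a : RatFunc ℂ) : LaurentSeries ℂ) = HahnSeries.C a := by
        rw [← RatFunc.algebraMap_C, coe_algMap, Polynomial.coe_C, PowerSeries.coe_C]
      rw [this, e, map_mul, RatFunc.laurent_C, map_mul, hcC,
        HahnSeries.C_apply, HahnSeries.coeff_single_zero_mul]
      have := hm n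
      rw [residue] at this
      rw [this, mul_zero]
  intro n hn
  have key : ∀ k : ℕ,
      ((RatFunc.laurent b u : RatFunc ℂ) : LaurentSeries ℂ).coeff (-1 - (k : ℤ)) = 0 := by
    intro k
    have h1 := hL ((X - C b) ^ k)
    rw [map_pow, map_sub, RatFunc.algebraMap_X, RatFunc.algebraMap_C, map_mul, map_pow,
      map_sub, RatFunc.laurent_X, RatFunc.laurent_C, add_sub_cancel_right,
      map_mul, map_pow, RatFunc.coe_X] at h1
    rw [← RatFunc.single_one_eq_pow] at h1
    have h2 : ((-1 : ℤ) - k) + k = -1 := by ring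
    rw [← h2, HahnSeries.coeff_single_mul_add, one_mul] at h1
    exact h1
  have hn' : n = -1 - ((-1 - n).toNat : ℤ) := by omega
  rw [hn']
  exact key _

private lemma eval_eq_zero (f g : Polynomial ℂ) (b : ℂ) (hg : g ≠ 0) (hgb : g.eval b = 0)
    (hneg : ∀ n : ℤ, n < 0 →
      ((RatFunc.laurent b (algebraMap (Polynomial ℂ) (RatFunc ℂ) f /
        algebraMap (Polynomial ℂ) (RatFunc ℂ) g) : RatFunc ℂ) : LaurentSeries ℂ).coeff n = 0) :
    f.eval b = 0 := by
  set u : RatFunc ℂ := algebraMap (Polynomial ℂ) (RatFunc ℂ) f /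
    algebraMap (Polynomial ℂ) (RatFunc ℂ) g with hu
  have hgne : algebraMap (Polynomial ℂ) (RatFunc ℂ) g ≠ 0 := RatFunc.algebraMap_ne_zero hg
  have hmul : u * algebraMap (Polynomial ℂ) (RatFunc ℂ) g
      = algebraMap (Polynomial ℂ) (RatFunc ℂ) f := div_mul_cancel₀ _ hgne
  have hlau : RatFunc.laurent b u * algebraMap (Polynomial ℂ) (RatFunc ℂ) (taylor b g)
      = algebraMap (Polynomial ℂ) (RatFunc ℂ) (taylor b f) := by
    rw [← RatFunc.laurent_algebraMap, ← RatFunc.laurent_algebraMap, ← map_mul, hmul]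
  have hcoe : ((RatFunc.laurent b u : RatFunc ℂ) : LaurentSeries ℂ) *
      (((taylor b g : Polynomial ℂ) : PowerSeries ℂ) : LaurentSeries ℂ)
      = (((taylor b f : Polynomial ℂ) : PowerSeries ℂ) : LaurentSeries ℂ) := by
    rw [← coe_algMap, ← coe_algMap, ← map_mul, hlau]
  set s := ((RatFunc.laurent b u : RatFunc ℂ) : LaurentSeries ℂ) with hs
  set T := (((taylor b g : Polynomial ℂ) : PowerSeries ℂ) : LaurentSeries ℂ) with hT
  have hT0 : ∀ j : ℤ, j ≤ 0 → T.coeff j = 0 := by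
    intro j hj
    rw [hT, PowerSeries.coeff_coe]
    rcases lt_or_eq_of_le hj with h | h
    · rw [if_pos h]
    · rw [h]
      simp only [if_neg (lt_irrefl (0:ℤ)), Int.natAbs_zero]
      rw [Polynomial.coeff_coe, taylor_coeff_zero, hgb]
  have hzero : (s * T).coeff 0 = 0 := by
    rw [HahnSeries.coeff_mul]
    refine Finset.sum_eq_zero ?_
    rintro ⟨i, j⟩ hij
    have hsum : i + j = 0 := (Finset.mem_addAntidiagonal.mp hij).2.2
    by_cases hi : i < 0
    · rw [hneg i hi, zero_mul]
    · have : j ≤ 0 := by omega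
      rw [hT0 j this, mul_zero]
  rw [hcoe] at hzero
  rw [PowerSeries.coeff_coe] at hzero
  simpa only [if_neg (lt_irrefl (0:ℤ)), Int.natAbs_zero, Polynomial.coeff_coe,
    taylor_coeff_zero] using hzero

private lemma key_dvd : ∀ (N : ℕ) (g f : Polynomial ℂ), g.natDegree ≤ N → g.Monic →
    g.Splits →
    (∀ b : ℂ, ∀ n : ℤ, n < 0 →
      ((RatFunc.laurent b (algebraMap (Polynomial ℂ) (RatFunc ℂ) f /
        algebraMap (Polynomial ℂ) (RatFunc ℂ) g) : RatFunc ℂ) : LaurentSeries ℂ).coeff n = 0) →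
    g ∣ f := by
  intro N
  induction N with
  | zero =>
    intro g f hdeg hmonic _ _
    have : g = 1 := hmonic.natDegree_eq_zero.mp (Nat.le_zero.mp hdeg)
    rw [this]; exact one_dvd f
  | succ N ih =>
    intro g f hdeg hmonic hsplits hneg
    by_cases hd0 : g.natDegree = 0
    · have : g = 1 := hmonic.natDegree_eq_zero.mp hd0
      rw [this]; exact one_dvd f
    · have hgne : g ≠ 0 := hmonic.ne_zero
      obtain ⟨b, hb⟩ : ∃ b : ℂ, g.eval b = 0 := by
        obtain ⟨b, hb⟩ := hsplits.exists_eval_eq_zero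
          (fun h => hd0 (natDegree_eq_zero_iff_degree_le_zero.mpr (le_of_eq h)))
        exact ⟨b, by simpa using hb⟩
      obtain ⟨g₁, hg₁⟩ : (X - C b) ∣ g := dvd_iff_isRoot.mpr hb
      have hXb : (X - C b : Polynomial ℂ).Monic := monic_X_sub_C b
      have hg₁monic : g₁.Monic := by
        have := hmonic
        rw [hg₁] at this
        exact hXb.of_mul_monic_left this
      have hg₁splits : g₁.Splits := by
        have : ((X - C b) * g₁).Splits := hg₁ ▸ hsplits
        exact this.of_dvd (hg₁ ▸ hgne) (dvd_mul_left _ _)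
      have hg₁deg : g₁.natDegree ≤ N := by
        have : g.natDegree = 1 + g₁.natDegree := by
          rw [hg₁, natDegree_mul (X_sub_C_ne_zero b) hg₁monic.ne_zero, natDegree_X_sub_C]
        omega
      have hfb : f.eval b = 0 := eval_eq_zero f g b hgne hb (hneg b)
      obtain ⟨f₁, hf₁⟩ : (X - C b) ∣ f := dvd_iff_isRoot.mpr hfb
      have hXbne : algebraMap (Polynomial ℂ) (RatFunc ℂ) (X - C b) ≠ 0 :=
        RatFunc.algebraMap_ne_zero (X_sub_C_ne_zero b)
      have hquot : ∀ b' : ℂ, ∀ n : ℤ, n < 0 →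
          ((RatFunc.laurent b' (algebraMap (Polynomial ℂ) (RatFunc ℂ) f₁ /
            algebraMap (Polynomial ℂ) (RatFunc ℂ) g₁) : RatFunc ℂ)
              : LaurentSeries ℂ).coeff n = 0 := by
        intro b' n hn
        have heq : algebraMap (Polynomial ℂ) (RatFunc ℂ) f /
            algebraMap (Polynomial ℂ) (RatFunc ℂ) g
            = algebraMap (Polynomial ℂ) (RatFunc ℂ) f₁ /
              algebraMap (Polynomial ℂ) (RatFunc ℂ) g₁ := by
          rw [hf₁, hg₁, map_mul, map_mul, mul_div_mul_left _ _ hXbne]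
        rw [← heq]
        exact hneg b' n hn
      have : g₁ ∣ f₁ := ih g₁ f₁ hg₁deg hg₁monic hg₁splits hquot
      rw [hg₁, hf₁]
      exact mul_dvd_mul_left _ this

theorem stmt14 (f g : Polynomial ℂ) (hmonic : g.Monic) (hconst : 0 < g.degree)
    (hsplits : (g.map (RingHom.id ℂ)).Splits)
    (h0 : ∀ b : ℂ, residue (algebraMap (Polynomial ℂ) (RatFunc ℂ) f /
      algebraMap (Polynomial ℂ) (RatFunc ℂ) g) b = 0)
    (hm : ∀ (m : ℕ) (b : ℂ), residue (RatFunc.X ^ m *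
      (algebraMap (Polynomial ℂ) (RatFunc ℂ) f /
        algebraMap (Polynomial ℂ) (RatFunc ℂ) g)) b = 0) :
    g ∣ f := by
  exact key_dvd g.natDegree g f le_rfl hmonic (by simpa using hsplits)
    (fun b => neg_coeff_vanish f g b (fun m => hm m b))
end
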